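/- arXiv:2208.00148 — 5 statements merged into one kernel-verified Lean document; each statement's English description precedes it below -/
import Mathlib

section
/- Let α be a real number with α > -1/2 and α ≠ 1. For every natural number n, ∫_{-1}^{1} x · C_{2n+1}^{α}(x) dx = (2(α+n) / ((α-1)(2n+3))) · binom(2α+2n-2, 2n+1), where binom denotes the generalized binomial coefficient. -/
open MeasureTheory Real

/-- The Gegenbauer polynomial `C_n^α` evaluated at `x`. -/
noncomputable def gegenbauer (α : ℝ) (n : ℕ) (x : ℝ) : ℝ :=
  ∑ k ∈ Finset.range (n / 2 + 1),
    (-1 : ℝ) ^ k *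
      (Real.Gamma ((n : ℝ) - (k : ℝ) + α) /
        (Real.Gamma α * (Nat.factorial k : ℝ) * (Nat.factorial (n - 2 * k) : ℝ))) *
      (2 * x) ^ (n - 2 * k)

/-- The generalized binomial coefficient `binom(z, k)` for real `z`. -/
noncomputable def genBinom (z : ℝ) (k : ℕ) : ℝ :=
  (∏ i ∈ Finset.range k, (z - (i : ℝ))) / (Nat.factorial k : ℝ)

/- Auxiliary machinery -/

/-- Pochhammer (rising factorial) for real base. -/
noncomputable def poch (α : ℝ) (m : ℕ) : ℝ := ∏ j ∈ Finset.range m, (α + j)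

lemma poch_succ (α : ℝ) (m : ℕ) : poch α (m+1) = poch α m * (α + m) :=
  Finset.prod_range_succ _ _

/-- The summand of the integral after termwise integration. -/
noncomputable def tt (α : ℝ) (n k : ℕ) : ℝ :=
  (-1)^k * poch α (2*n+1-k) * 4^(n+1-k) /
    ((k.factorial : ℝ) * ((2*n+1-2*k).factorial : ℝ) * ((2*n+3-2*k : ℕ) : ℝ))

/-- Zeilberger certificate polynomial. -/
noncomputable def pval (α : ℝ) (n k : ℕ) : ℝ :=
  -8*(12*(n:ℝ)^3+14*α*(n:ℝ)^2+36*(n:ℝ)^2+4*α^2*(n:ℝ)+33*α*(n:ℝ)+33*(n:ℝ)+7*α^2+16*α+9) * (k:ℝ)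
  + 8*(14*(n:ℝ)^2+12*α*(n:ℝ)+27*(n:ℝ)+2*α^2+13*α+13) * (k:ℝ)^2
  - 16*(2*(n:ℝ)+α+2) * (k:ℝ)^3

/-- The telescoping term. -/
noncomputable def GG (α : ℝ) (n k : ℕ) : ℝ :=
  (-1)^k * pval α n k * poch α (2*n+1-k) * 4^(n+1-k) /
    (((2*(n:ℝ)+5)*(2*(n:ℝ)+2)) * (k.factorial : ℝ) * ((2*n+2-2*k).factorial : ℝ) *
      (((2*n+3-2*k : ℕ):ℝ) * ((2*n+5-2*k : ℕ):ℝ)))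

/-- The ratio of consecutive closed forms. -/
noncomputable def cc (α : ℝ) (n : ℕ) : ℝ :=
  2*(α+(n:ℝ)+1)*(2*α+2*(n:ℝ)-1)/((2*(n:ℝ)+5)*(2*(n:ℝ)+2))

/-- The closed form. -/
noncomputable def Cc (α : ℝ) (n : ℕ) : ℝ :=
  (2 * (α + (n : ℝ)) / ((α - 1) * (2 * (n : ℝ) + 3))) *
    genBinom (2 * α + 2 * (n : ℝ) - 2) (2 * n + 1)

lemma cert (α : ℝ) (k m : ℕ) :
    tt α (k+m+1) k = cc α (k+m) * tt α (k+m) k + (GG α (k+m) (k+1) - GG α (k+m) k) := by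
  unfold tt GG pval cc
  simp only [show 2*(k+m+1)+1-k = (k+2*m+2)+1 from by omega,
    show 2*(k+m)+1-k = (k+2*m)+1 from by omega,
    show 2*(k+m)+1-(k+1) = k+2*m from by omega,
    show (k+m+1)+1-k = m+2 from by omega,
    show (k+m)+1-k = m+1 from by omega,
    show (k+m)+1-(k+1) = m from by omega,
    show 2*(k+m+1)+1-2*k = (2*m+2)+1 from by omega,
    show 2*(k+m)+1-2*k = 2*m+1 from by omega,
    show 2*(k+m)+2-2*(k+1) = 2*m from by omega,
    show 2*(k+m)+2-2*k = (2*m+1)+1 from by omega,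
    show 2*(k+m+1)+3-2*k = 2*m+5 from by omega,
    show 2*(k+m)+3-2*k = 2*m+3 from by omega,
    show 2*(k+m)+3-2*(k+1) = 2*m+1 from by omega,
    show 2*(k+m)+5-2*k = 2*m+5 from by omega,
    show 2*(k+m)+5-2*(k+1) = 2*m+3 from by omega]
  rw [poch_succ, show k+2*m+2 = (k+2*m+1)+1 from by omega, poch_succ,
    show k+2*m+1 = (k+2*m)+1 from rfl, poch_succ]
  rw [show m+2 = (m+1)+1 from rfl]
  simp only [pow_succ, Nat.factorial_succ]
  have h1 : (Nat.factorial k : ℝ) ≠ 0 := Nat.cast_ne_zero.mpr (Nat.factorial_ne_zero k)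
  have h2 : ((2*m).factorial : ℝ) ≠ 0 := Nat.cast_ne_zero.mpr (Nat.factorial_ne_zero _)
  have h3 : ((k:ℝ)+1) ≠ 0 := by positivity
  have h4 : (2*(m:ℝ)+1) ≠ 0 := by positivity
  have h5 : (2*(m:ℝ)+2) ≠ 0 := by positivity
  have h6 : (2*(m:ℝ)+3) ≠ 0 := by positivity
  have h7 : (2*(m:ℝ)+5) ≠ 0 := by positivity
  have h8 : (2*((k:ℝ)+(m:ℝ))+5) ≠ 0 := by positivity
  have h9 : (2*((k:ℝ)+(m:ℝ))+2) ≠ 0 := by positivity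
  push_cast
  field_simp
  ring

lemma GG_zero (α : ℝ) (n : ℕ) : GG α n 0 = 0 := by
  simp [GG, pval]

lemma boundary (α : ℝ) (n : ℕ) : tt α (n+1) (n+1) = - GG α n (n+1) := by
  unfold tt GG pval
  simp only [show 2*(n+1)+1-(n+1) = n+2 from by omega,
    show (n+1)+1-(n+1) = 1 from by omega,
    show 2*(n+1)+1-2*(n+1) = 1 from by omega,
    show 2*(n+1)+3-2*(n+1) = 3 from by omega,
    show 2*n+1-(n+1) = n from by omega,
    show n+1-(n+1) = 0 from by omega,
    show 2*n+2-2*(n+1) = 0 from by omega,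
    show 2*n+3-2*(n+1) = 1 from by omega,
    show 2*n+5-2*(n+1) = 3 from by omega]
  rw [show n+2 = (n+1)+1 from rfl, poch_succ, poch_succ]
  simp only [pow_succ, pow_zero, Nat.factorial_succ, Nat.factorial_zero]
  have h1 : ((n:ℝ)+1) ≠ 0 := by positivity
  have h2 : (Nat.factorial n : ℝ) ≠ 0 := Nat.cast_ne_zero.mpr (Nat.factorial_ne_zero n)
  have h8 : (2*(n:ℝ)+5) ≠ 0 := by positivity
  have h9 : (2*(n:ℝ)+2) ≠ 0 := by positivity
  push_cast
  field_simp
  ring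

lemma CcRec (α : ℝ) (hα1 : α ≠ 1) (n : ℕ) : Cc α (n+1) = cc α n * Cc α n := by
  unfold Cc cc genBinom
  have hp : (∏ i ∈ Finset.range (2*(n+1)+1), (2*α + 2*(↑(n+1):ℝ) - 2 - (i:ℝ)))
      = (2*α+2*(n:ℝ))*(2*α+2*(n:ℝ)-1) * ∏ i ∈ Finset.range (2*n+1), (2*α + 2*(n:ℝ) - 2 - (i:ℝ)) := by
    rw [show 2*(n+1)+1 = (2*n+2)+1 from by omega, Finset.prod_range_succ',
      show 2*n+2 = (2*n+1)+1 from rfl, Finset.prod_range_succ']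
    have hc : ∀ kk ∈ Finset.range (2*n+1), (2*α + 2*((n+1:ℕ):ℝ) - 2 - ((kk+1+1:ℕ):ℝ))
        = 2*α + 2*(n:ℝ) - 2 - (kk:ℝ) := fun kk _ => by push_cast; ring
    rw [Finset.prod_congr rfl hc]
    push_cast; ring
  rw [hp, show 2*(n+1)+1 = ((2*n+1)+1)+1 from by omega, Nat.factorial_succ, Nat.factorial_succ]
  have h1 : ((2*n+1).factorial : ℝ) ≠ 0 := Nat.cast_ne_zero.mpr (Nat.factorial_ne_zero _)
  have h2 : (α - 1) ≠ 0 := sub_ne_zero.mpr hα1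
  have h3 : (2*(n:ℝ)+3) ≠ 0 := by positivity
  have h4 : (2*(n:ℝ)+5) ≠ 0 := by positivity
  have h5 : (2*(n:ℝ)+2) ≠ 0 := by positivity
  have h6 : ((2*n+1:ℕ):ℝ)+1+1 ≠ 0 := by positivity
  have h7 : ((2*n+1:ℕ):ℝ)+1 ≠ 0 := by positivity
  push_cast
  field_simp
  ring

lemma key (α : ℝ) (hα1 : α ≠ 1) (n : ℕ) :
    ∑ k ∈ Finset.range (n+1), tt α n k = Cc α n := by
  induction n with
  | zero =>
    have h2 : (α - 1) ≠ 0 := sub_ne_zero.mpr hα1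
    simp only [Finset.sum_range_one, tt, Cc, genBinom]
    norm_num [poch]
    field_simp
    ring
  | succ n ih =>
    rw [Finset.sum_range_succ]
    have h1 : ∀ k ∈ Finset.range (n+1),
        tt α (n+1) k = cc α n * tt α n k + (GG α n (k+1) - GG α n k) := by
      intro k hk
      obtain ⟨m, rfl⟩ := Nat.exists_eq_add_of_le (Nat.lt_succ_iff.mp (Finset.mem_range.mp hk))
      exact cert α k m
    rw [Finset.sum_congr rfl h1, Finset.sum_add_distrib, ← Finset.mul_sum,
      Finset.sum_range_sub (GG α n), ih, GG_zero, boundary, CcRec α hα1 n]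
    ring

lemma gamma_poch (α : ℝ) (hα : -1/2 < α) (h0 : α ≠ 0) (m : ℕ) :
    Real.Gamma (α + m) = Real.Gamma α * poch α m := by
  induction m with
  | zero => simp [poch]
  | succ m ih =>
    have hne : α + m ≠ 0 := by
      cases m with
      | zero => simpa using h0
      | succ m =>
        have : (0:ℝ) ≤ m := Nat.cast_nonneg m
        push_cast
        intro h; linarith
    have h : α + ((m+1:ℕ):ℝ) = (α + m) + 1 := by push_cast; ring
    rw [h, Real.Gamma_add_one hne, ih, poch_succ]; ring

lemma gamma_ne (α : ℝ) (hα : -1/2 < α) (h0 : α ≠ 0) : Real.Gamma α ≠ 0 := by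
  refine Real.Gamma_ne_zero fun j => ?_
  cases j with
  | zero => simpa using h0
  | succ j =>
    intro h
    have : (0:ℝ) ≤ j := Nat.cast_nonneg j
    rw [h] at hα; push_cast at hα; linarith

lemma int_aux (C : ℝ) (m : ℕ) :
    ∫ x in (-1:ℝ)..1, x * (C * (2*x)^m) = C * 2^m * (1 - (-1:ℝ)^(m+2)) / ((m:ℝ)+2) := by
  have h : ∀ x : ℝ, x * (C * (2*x)^m) = (C * 2^m) * x^(m+1) := by
    intro x; rw [mul_pow]; ring
  simp_rw [h]
  rw [intervalIntegral.integral_const_mul, integral_pow]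
  simp only [show m+1+1 = m+2 from by omega]
  push_cast
  ring

theorem gegenbauer_x_odd_integral (α : ℝ) (hα : α > -1/2) (hα1 : α ≠ 1) (n : ℕ) :
    ∫ x in (-1:ℝ)..1, x * gegenbauer α (2 * n + 1) x =
      (2 * (α + (n : ℝ)) / ((α - 1) * (2 * (n : ℝ) + 3))) *
        genBinom (2 * α + 2 * (n : ℝ) - 2) (2 * n + 1) := by
  by_cases h0 : α = 0
  · subst h0
    have hg0 : ∀ x:ℝ, gegenbauer 0 (2*n+1) x = 0 := by
      intro x; simp [gegenbauer, Real.Gamma_zero]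
    simp only [hg0, mul_zero, intervalIntegral.integral_zero]
    cases n with
    | zero => norm_num [genBinom]
    | succ nn =>
      symm
      rw [mul_eq_zero]; right
      unfold genBinom
      rw [div_eq_zero_iff]; left
      exact Finset.prod_eq_zero (Finset.mem_range.mpr (by omega : 2*nn < 2*(nn+1)+1))
        (by push_cast; ring)
  · have hstep : ∫ x in (-1:ℝ)..1, x * gegenbauer α (2*n+1) x
        = ∑ k ∈ Finset.range (n+1), tt α n k := by
      simp only [gegenbauer, show (2*n+1)/2 = n from by omega, Finset.mul_sum]
      rw [intervalIntegral.integral_finset_sum]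
      · refine Finset.sum_congr rfl ?_
        intro k hk
        obtain ⟨m, rfl⟩ := Nat.exists_eq_add_of_le (Nat.lt_succ_iff.mp (Finset.mem_range.mp hk))
        simp only [show 2*(k+m)+1-2*k = 2*m+1 from by omega]
        rw [int_aux]
        rw [show (-1:ℝ)^(2*m+1+2) = -1 from Odd.neg_one_pow ⟨m+1, by omega⟩]
        have hg : ((2*(k+m)+1:ℕ):ℝ) - (k:ℝ) + α = α + ((k+(2*m+1) : ℕ):ℝ) := by
          push_cast; ring
        rw [hg, gamma_poch α hα h0]
        unfold tt
        simp only [show 2*(k+m)+1-k = k+(2*m+1) from by omega,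
          show 2*(k+m)+1-2*k = 2*m+1 from by omega,
          show 2*(k+m)+3-2*k = 2*m+3 from by omega,
          show (k+m)+1-k = m+1 from by omega]
        rw [show (4:ℝ) = 2^2 from by norm_num, ← pow_mul,
          show 2*(m+1) = (2*m+1)+1 from by omega, pow_succ]
        have hΓ : Real.Gamma α ≠ 0 := gamma_ne α hα h0
        have h1 : (Nat.factorial k : ℝ) ≠ 0 := Nat.cast_ne_zero.mpr (Nat.factorial_ne_zero k)
        have h2 : ((2*m+1).factorial : ℝ) ≠ 0 := Nat.cast_ne_zero.mpr (Nat.factorial_ne_zero _)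
        have h3 : (2*(m:ℝ)+3) ≠ 0 := by positivity
        push_cast
        field_simp
        ring
      · intro k hk
        apply Continuous.intervalIntegrable
        fun_prop
    rw [hstep]
    exact key α hα1 n
end

section
/- Let α be a real number with α ≠ 1 and let t be a real number with 0 < t < 1. Then ∫_{-1}^{1} (1 - 2xt + t²)^{-α} dx = (1/(α-1)) · Σ_{n=0}^{∞} binom(2α+2n-2, 2n+1) · t^{2n}, where the series on the right converges and binom denotes the generalized binomial coefficient. -/
set_option maxHeartbeats 1000000

open MeasureTheory Real

lemma genBinom_zero (z : ℝ) : genBinom z 0 = 1 := by simp [genBinom]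

lemma genBinom_succ (β : ℝ) (k : ℕ) :
    ((k : ℝ) + 1) * genBinom β (k + 1) = (β - k) * genBinom β k := by
  have hk : ((Nat.factorial k : ℝ)) ≠ 0 := Nat.cast_ne_zero.2 (Nat.factorial_ne_zero k)
  have hk1 : ((k : ℝ) + 1) ≠ 0 := by positivity
  simp only [genBinom, Finset.prod_range_succ, Nat.factorial_succ, Nat.cast_mul,
    Nat.cast_add, Nat.cast_one]
  field_simp

lemma abs_genBinom_succ (β : ℝ) (k : ℕ) :
    |genBinom β (k + 1)| = |β - k| * |genBinom β k| / ((k : ℝ) + 1) := by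
  have hk1 : (0:ℝ) < (k : ℝ) + 1 := by positivity
  have := genBinom_succ β k
  have h2 : genBinom β (k+1) = (β - k) * genBinom β k / ((k:ℝ)+1) := by
    field_simp at this ⊢; linarith [this]
  rw [h2, abs_div, abs_mul, abs_of_pos hk1]

lemma summable_genBinom_aux (β r : ℝ) (hr0 : 0 < r) (hr1 : r < 1) :
    Summable (fun k : ℕ => (k:ℝ) * |genBinom β k| * r ^ (k-1)) := by
  set L := (1 + r)/2 with hLdef
  have hL1 : L < 1 := by rw [hLdef]; linarith
  have hrL : r < L := by rw [hLdef]; linarith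
  apply summable_of_ratio_norm_eventually_le hL1
  have h1 : Filter.Tendsto (fun k : ℕ => (k:ℝ) * (L - r)) Filter.atTop Filter.atTop :=
    Filter.Tendsto.atTop_mul_const (by linarith) tendsto_natCast_atTop_atTop
  filter_upwards [h1.eventually_ge_atTop (|β| * r), Filter.eventually_ge_atTop 1]
    with k hk hk1
  have hk1' : (1:ℝ) ≤ (k:ℝ) := by exact_mod_cast hk1
  have hgnn : (0:ℝ) ≤ |genBinom β k| * r ^ (k-1) := by positivity
  have hpow : r ^ k = r ^ (k-1) * r := by
    rw [← pow_succ]; congr 1; omega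
  have hnorm1 : ‖((k:ℝ)+1) * |genBinom β (k+1)| * r ^ k‖
      = |β - k| * (|genBinom β k| * r ^ (k-1)) * r := by
    rw [Real.norm_eq_abs, abs_of_nonneg (by positivity)]
    rw [abs_genBinom_succ, hpow]
    field_simp
  have hnorm2 : ‖(k:ℝ) * |genBinom β k| * r ^ (k-1)‖
      = (k:ℝ) * (|genBinom β k| * r ^ (k-1)) := by
    rw [Real.norm_eq_abs, abs_of_nonneg (by positivity)]; ring
  push_cast
  rw [hnorm1, hnorm2]
  have habs : |β - (k:ℝ)| ≤ |β| + k := by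
    calc |β - (k:ℝ)| ≤ |β| + |(k:ℝ)| := abs_sub _ _
    _ = |β| + k := by rw [Nat.abs_cast]
  have key : |β - (k:ℝ)| * r ≤ L * k := by
    calc |β - (k:ℝ)| * r ≤ (|β| + k) * r := by nlinarith
    _ = |β| * r + k * r := by ring
    _ ≤ k * (L - r) + k * r := by linarith
    _ = L * k := by ring
  calc |β - (k:ℝ)| * (|genBinom β k| * r ^ (k-1)) * r
      = (|β - (k:ℝ)| * r) * (|genBinom β k| * r ^ (k-1)) := by ring
    _ ≤ (L * k) * (|genBinom β k| * r ^ (k-1)) := by nlinarith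
    _ = L * ((k:ℝ) * (|genBinom β k| * r ^ (k-1))) := by ring

lemma hasSum_genBinom (β x : ℝ) (hx : |x| < 1) :
    HasSum (fun k : ℕ => genBinom β k * x ^ k) ((1 + x) ^ β) := by
  set r := (1 + |x|) / 2 with hrdef
  have hxnn : (0:ℝ) ≤ |x| := abs_nonneg x
  have hr0 : 0 < r := by rw [hrdef]; positivity
  have hr1 : r < 1 := by rw [hrdef]; linarith
  have hxr : |x| < r := by rw [hrdef]; linarith
  set s : Set ℝ := Set.Ioo (-r) r with hsdef
  have hs_open : IsOpen s := isOpen_Ioo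
  have hs_conn : IsPreconnected s := isPreconnected_Ioo
  have h0s : (0:ℝ) ∈ s := Set.mem_Ioo.2 ⟨by linarith, hr0⟩
  have hxs : x ∈ s := by
    rcases abs_lt.1 hxr with ⟨h1, h2⟩; exact ⟨h1, h2⟩
  have hu : Summable (fun k : ℕ => (k:ℝ) * |genBinom β k| * r ^ (k-1)) :=
    summable_genBinom_aux β r hr0 hr1
  have hg : ∀ (k : ℕ) (y : ℝ), y ∈ s →
      HasDerivAt (fun z => genBinom β k * z ^ k) (genBinom β k * ((k:ℝ) * y ^ (k-1))) y :=
    fun k y _ => (hasDerivAt_pow k y).const_mul _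
  have hg'bound : ∀ (k : ℕ) (y : ℝ), y ∈ s →
      ‖genBinom β k * ((k:ℝ) * y ^ (k-1))‖ ≤ (k:ℝ) * |genBinom β k| * r ^ (k-1) := by
    intro k y hy
    have hyr : |y| ≤ r := le_of_lt (abs_lt.2 ⟨hy.1, hy.2⟩)
    have : ‖genBinom β k * ((k:ℝ) * y ^ (k-1))‖
        = (k:ℝ) * |genBinom β k| * |y| ^ (k-1) := by
      rw [Real.norm_eq_abs, abs_mul, abs_mul, abs_pow, Nat.abs_cast]; ring
    rw [this]
    exact mul_le_mul_of_nonneg_left (pow_le_pow_left₀ (abs_nonneg y) hyr (k-1)) (by positivity)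
  have hg0 : Summable (fun k : ℕ => genBinom β k * (0:ℝ) ^ k) := by
    apply summable_of_ne_finset_zero (s := {0})
    intro k hk
    simp only [Finset.mem_singleton] at hk
    rw [zero_pow hk, mul_zero]
  have hsum : ∀ y ∈ s, Summable (fun k : ℕ => genBinom β k * y ^ k) := fun y hy =>
    summable_of_summable_hasDerivAt_of_isPreconnected hu hs_open hs_conn hg hg'bound h0s hg0 hy
  set G : ℝ → ℝ := fun y => ∑' k : ℕ, genBinom β k * y ^ k with hGdef
  have hGderiv : ∀ y ∈ s,
      HasDerivAt G (∑' k : ℕ, genBinom β k * ((k:ℝ) * y ^ (k-1))) y := fun y hy =>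
    hasDerivAt_tsum_of_isPreconnected hu hs_open hs_conn hg hg'bound h0s hg0 hy
  have hODE : ∀ y ∈ s, (1 + y) * (∑' k : ℕ, genBinom β k * ((k:ℝ) * y ^ (k-1))) = β * G y := by
    intro y hy
    have hDsum : Summable (fun k : ℕ => genBinom β k * ((k:ℝ) * y ^ (k-1))) :=
      Summable.of_norm_bounded hu (fun k => hg'bound k y hy)
    set D := ∑' k : ℕ, genBinom β k * ((k:ℝ) * y ^ (k-1)) with hDdef
    have hD : HasSum (fun k : ℕ => genBinom β k * ((k:ℝ) * y ^ (k-1))) D := hDsum.hasSum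
    have hDshift : HasSum (fun k : ℕ => genBinom β (k+1) * (((k:ℕ)+1 : ℝ) * y ^ k)) D := by
      have h := (hasSum_nat_add_iff' (f := fun k : ℕ => genBinom β k * ((k:ℝ) * y ^ (k-1))) 1).2 hD
      simp only [Finset.range_one, Finset.sum_singleton, Nat.cast_zero, zero_mul, mul_zero,
        sub_zero] at h
      convert h using 2 with k
      · rfl
      push_cast
      norm_num
    have hA : HasSum (fun k : ℕ => ((k:ℝ)+1) * genBinom β (k+1) * y ^ k) D := by
      convert hDshift using 2 with k; ring
    have hB : HasSum (fun k : ℕ => (k:ℝ) * genBinom β k * y ^ k) (D * y) := by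
      have h := hD.mul_right y
      convert h using 2 with k
      · rfl
      cases k with
      | zero => simp
      | succ m =>
        simp only [Nat.add_sub_cancel]
        rw [← mul_assoc, mul_assoc _ _ y, ← pow_succ]
        ring
    have hAB : HasSum (fun k : ℕ => β * (genBinom β k * y ^ k)) (D + D * y) := by
      have h := hA.add hB
      convert h using 2 with k
      calc β * (genBinom β k * y ^ k)
          = ((β - k) * genBinom β k + k * genBinom β k) * y ^ k := by ring
        _ = (((k:ℝ)+1) * genBinom β (k+1) + k * genBinom β k) * y ^ k := by
            rw [genBinom_succ]
        _ = ((k:ℝ)+1) * genBinom β (k+1) * y ^ k + (k:ℝ) * genBinom β k * y ^ k := by ring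
    have hβG : HasSum (fun k : ℕ => β * (genBinom β k * y ^ k)) (β * G y) :=
      (hsum y hy).hasSum.mul_left β
    have := hAB.unique hβG
    rw [hDdef] at this ⊢
    linarith [this]
  set F : ℝ → ℝ := fun y => G y * (1 + y) ^ (-β) with hFdef
  have hF : ∀ y ∈ s, HasDerivAt F 0 y := by
    intro y hy
    have h1y : (0:ℝ) < 1 + y := by
      have := hy.1; simp only [hsdef, Set.mem_Ioo] at hy; linarith [hy.1, hr1]
    have hrpow : HasDerivAt (fun z : ℝ => (1 + z) ^ (-β)) (-β * (1+y) ^ (-β-1)) y := by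
      have h := Real.hasDerivAt_rpow_const (x := 1+y) (p := -β) (Or.inl h1y.ne')
      have hc : HasDerivAt (fun z : ℝ => 1 + z) 1 y := (hasDerivAt_id y).const_add 1
      have h2 := h.comp y hc
      rw [mul_one] at h2
      exact h2
    have hmul := (hGderiv y hy).mul hrpow
    have hzero : (∑' k : ℕ, genBinom β k * ((k:ℝ) * y ^ (k-1))) * ((1+y) ^ (-β))
        + G y * (-β * (1+y) ^ (-β-1)) = 0 := by
      have hsplit : (1+y) ^ (-β) = (1+y) ^ (-β-1) * (1+y) := by
        have h2 := Real.rpow_add_one h1y.ne' (-β-1)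
        have h3 : -β - 1 + 1 = -β := by ring
        rw [h3] at h2
        exact h2
      rw [hsplit]
      have h := hODE y hy
      linear_combination ((1+y) ^ (-β-1)) * h
    rw [← hzero]
    exact hmul
  have hconst : F x = F 0 := by
    apply (convex_Ioo (-r) r).is_const_of_fderivWithin_eq_zero
      (fun y hy => ((hF y hy).differentiableAt).differentiableWithinAt)
      (fun y hy => ?_) hxs h0s
    rw [fderivWithin_eq_fderiv (hs_open.uniqueDiffOn y hy) (hF y hy).differentiableAt,
        (hF y hy).hasFDerivAt.fderiv]
    ext z
    simp

  have hG0 : G 0 = 1 := by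
    have h : G 0 = ∑' k : ℕ, genBinom β k * (0:ℝ) ^ k := rfl
    rw [h, tsum_eq_single 0 (fun k hk => by rw [zero_pow hk, mul_zero])]
    simp [genBinom_zero]
  have hF0 : F 0 = 1 := by
    rw [hFdef]; simp only [add_zero, Real.one_rpow, mul_one, hG0]
  have hrpow_pos : (0:ℝ) < (1 + x) ^ (-β) :=
    Real.rpow_pos_of_pos (by rcases hxs with ⟨h1, _⟩; linarith [hr1]) _
  have hGx : G x = (1 + x) ^ β := by
    have h1x : (0:ℝ) < 1 + x := by rcases hxs with ⟨h1, _⟩; linarith [hr1]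
    have h : G x * (1 + x) ^ (-β) = 1 := hconst.trans hF0
    rw [Real.rpow_neg h1x.le] at h
    have hne : (1 + x) ^ β ≠ 0 := ne_of_gt (Real.rpow_pos_of_pos h1x β)
    field_simp at h
    exact h
  have h5 : HasSum (fun k : ℕ => genBinom β k * x ^ k) (G x) := (hsum x hxs).hasSum
  rwa [hGx] at h5

lemma genBinom_reflect (α : ℝ) (n : ℕ) :
    genBinom (2*α + 2*(n:ℝ) - 2) (2*n+1) = - genBinom (2 - 2*α) (2*n+1) := by
  unfold genBinom
  rw [← neg_div]
  congr 1
  have h1 : ∏ i ∈ Finset.range (2*n+1), (2*α + 2*(n:ℝ) - 2 - i)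
      = ∏ i ∈ Finset.range (2*n+1), (2*α - 2 + (i:ℝ)) := by
    rw [← Finset.prod_range_reflect (fun j : ℕ => 2*α - 2 + (j:ℝ)) (2*n+1)]
    apply Finset.prod_congr rfl
    intro i hi
    simp only [Finset.mem_range] at hi
    have h2 : 2*n+1-1-i = 2*n - i := by omega
    rw [h2]
    have h3 : ((2*n - i : ℕ) : ℝ) = 2*(n:ℝ) - i := by
      have : i ≤ 2*n := by omega
      push_cast [this]
      ring
    rw [h3]
    ring
  rw [h1]
  have h4 : ∀ i : ℕ, (2*α - 2 + (i:ℝ)) = (-1) * (2 - 2*α - i) := fun i => by ring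
  simp_rw [h4]
  rw [Finset.prod_mul_distrib, Finset.prod_const, Finset.card_range]
  have h5 : ((-1:ℝ)) ^ (2*n+1) = -1 := Odd.neg_one_pow ⟨n, by ring⟩
  rw [h5]
  ring

theorem generating_integral_series (α : ℝ) (hα : α ≠ 1) (t : ℝ) (ht0 : 0 < t)
    (ht1 : t < 1) :
    Summable (fun n : ℕ => genBinom (2 * α + 2 * (n : ℝ) - 2) (2 * n + 1) * t ^ (2 * n)) ∧
    ∫ x in (-1:ℝ)..1, (1 - 2 * x * t + t ^ 2) ^ (-α) =
      (1 / (α - 1)) *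
        ∑' n : ℕ, genBinom (2 * α + 2 * (n : ℝ) - 2) (2 * n + 1) * t ^ (2 * n) := by
  have h1α : 1 - α ≠ 0 := fun h => hα (by linarith)
  set β : ℝ := 2 - 2*α with hβ
  have ht' : |t| < 1 := abs_lt.2 ⟨by linarith, ht1⟩
  have hmt : |(-t)| < 1 := by rwa [abs_neg]
  have ha := hasSum_genBinom β t ht'
  have hb := hasSum_genBinom β (-t) hmt
  rw [show (1 + -t) = 1 - t by ring] at hb
  have hc := hb.sub ha
  have hinj : Function.Injective (fun n : ℕ => 2*n+1) := fun a b h => by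
    simpa using h
  have hzero : ∀ k ∉ Set.range (fun n : ℕ => 2*n+1),
      genBinom β k * (-t)^k - genBinom β k * t^k = 0 := by
    intro k hk
    have hkeven : Even k := by
      rcases Nat.even_or_odd k with he | ho
      · exact he
      · obtain ⟨m, hm⟩ := ho
        exact absurd ⟨m, by simp; omega⟩ hk
    rw [hkeven.neg_pow]; ring
  have hd := (Function.Injective.hasSum_iff hinj hzero).2 hc
  have hterm : (fun n : ℕ => genBinom β (2*n+1) * (-t)^(2*n+1) - genBinom β (2*n+1) * t^(2*n+1))
      = fun n : ℕ => (2*t) * (genBinom (2 * α + 2 * (n:ℝ) - 2) (2*n+1) * t^(2*n)) := by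
    funext n
    rw [genBinom_reflect]
    have hodd : (-t)^(2*n+1) = -t^(2*n+1) := Odd.neg_pow ⟨n, by ring⟩ t
    rw [hodd, pow_succ]
    ring
  have he : HasSum (fun n : ℕ => (2*t) * (genBinom (2 * α + 2 * (n:ℝ) - 2) (2*n+1) * t^(2*n)))
      ((1-t)^β - (1+t)^β) := hterm ▸ hd
  have h2t : (2*t) ≠ 0 := by positivity
  have hf : HasSum (fun n : ℕ => genBinom (2 * α + 2 * (n:ℝ) - 2) (2*n+1) * t^(2*n))
      (((1-t)^β - (1+t)^β) / (2*t)) := by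
    have h := he.div_const (2*t)
    have h2 : (fun n : ℕ => (2*t) * (genBinom (2 * α + 2 * (n:ℝ) - 2) (2*n+1) * t^(2*n)) / (2*t))
        = fun n : ℕ => genBinom (2 * α + 2 * (n:ℝ) - 2) (2*n+1) * t^(2*n) := by
      funext n
      exact mul_div_cancel_left₀ _ h2t
    rwa [h2] at h
  refine ⟨hf.summable, ?_⟩
  rw [hf.tsum_eq]
  -- now compute the integral
  have hbase : ∀ x ∈ Set.uIcc (-1:ℝ) 1, 0 < 1 - 2*x*t + t^2 := by
    intro x hx
    rw [Set.uIcc_of_le (by norm_num)] at hx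
    nlinarith [hx.1, hx.2, sq_nonneg (1-t)]
  set F : ℝ → ℝ := fun x => (1 - 2*x*t + t^2) ^ (1-α) / (-2*t*(1-α)) with hFdef
  have hderiv : ∀ x ∈ Set.uIcc (-1:ℝ) 1, HasDerivAt F ((1 - 2*x*t + t^2) ^ (-α)) x := by
    intro x hx
    have hpos := hbase x hx
    have hu : HasDerivAt (fun x : ℝ => 1 - 2*x*t + t^2) (-(2*t)) x := by
      have h0 : (fun x : ℝ => 1 - 2*x*t + t^2) = (fun x : ℝ => 1 - (2*t)*x + t^2) := by
        funext z; ring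
      rw [h0]
      simpa using (((hasDerivAt_id x).const_mul (2*t)).const_sub 1).add_const (t^2)
    have hr := hu.rpow_const (p := 1-α) (Or.inl hpos.ne')
    have h := hr.div_const (-2*t*(1-α))
    convert h using 1
    · rfl
    · rfl
    rw [show (1-α-1) = -α by ring]
    field_simp
  have hcont : IntervalIntegrable (fun x => (1 - 2*x*t + t^2) ^ (-α)) volume (-1) 1 := by
    apply ContinuousOn.intervalIntegrable
    apply ContinuousOn.rpow_const
    · fun_prop
    · intro x hx; exact Or.inl (hbase x hx).ne'
  rw [intervalIntegral.integral_eq_sub_of_hasDerivAt hderiv hcont]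
  rw [hFdef]
  simp only []
  have e1 : (1:ℝ) - 2*1*t + t^2 = (1-t)^2 := by ring
  have e2 : (1:ℝ) - 2*(-1)*t + t^2 = (1+t)^2 := by ring
  rw [e1, e2]
  have hp1 : (((1-t)^2 : ℝ)) ^ (1-α) = (1-t) ^ β := by
    rw [← Real.rpow_natCast (1-t) 2, ← Real.rpow_mul (by linarith)]
    congr 1
    rw [hβ]; push_cast; ring
  have hp2 : (((1+t)^2 : ℝ)) ^ (1-α) = (1+t) ^ β := by
    rw [← Real.rpow_natCast (1+t) 2, ← Real.rpow_mul (by linarith)]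
    congr 1
    rw [hβ]; push_cast; ring
  rw [hp1, hp2]
  have hαne : α - 1 ≠ 0 := fun h => hα (by linarith)
  field_simp
  ring
end

section
/- Let n be a natural number and define u : ℝ × ℝ → ℝ by u(x,t) = e^{-(n+1)(n+2)t} · C_n^{3/2}(2x-1). Then u is a classical solution of the neutral Kimura equation: for all x ∈ ℝ and t ∈ ℝ, ∂_t u(x,t) = ∂_x² ( x(1-x) · u(x,t) ), where ∂_x² denotes the second partial derivative in x of the function x ↦ x(1-x)u(x,t). -/
open MeasureTheory Real

namespace KimuraAux
open Polynomial

noncomputable def a (n k : ℕ) : ℝ :=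
  (-1 : ℝ) ^ k *
    (Real.Gamma ((n : ℝ) - (k : ℝ) + 3/2) /
      (Real.Gamma (3/2) * (Nat.factorial k : ℝ) * (Nat.factorial (n - 2 * k) : ℝ))) *
    2 ^ (n - 2 * k)

noncomputable def P (n : ℕ) : Polynomial ℝ :=
  ∑ k ∈ Finset.range (n / 2 + 1), C (a n k) * X ^ (n - 2 * k)

lemma eval_P (n : ℕ) (x : ℝ) : (P n).eval x = gegenbauer (3/2) n x := by
  simp only [P, gegenbauer, eval_finset_sum, eval_mul, eval_pow, eval_C, eval_X, a, mul_pow]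
  exact Finset.sum_congr rfl fun k _ => by ring

lemma a_key (n k : ℕ) (h : 2 * (k + 1) ≤ n) :
    a n k * ((n - 2 * k : ℕ) : ℝ) * ((n - 2 * k - 1 : ℕ) : ℝ)
      + a n (k + 1) * (2 * ((k : ℝ) + 1)) * (2 * (n : ℝ) - 2 * ((k : ℝ) + 1) + 3) = 0 := by
  obtain ⟨m, rfl⟩ : ∃ m, n = 2 * (k + 1) + m := ⟨n - 2 * (k + 1), by omega⟩
  have e1 : 2 * (k + 1) + m - 2 * k = m + 2 := by omega
  have e2 : 2 * (k + 1) + m - 2 * k - 1 = m + 1 := by omega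
  have e3 : 2 * (k + 1) + m - 2 * (k + 1) = m := by omega
  have hx : ((k : ℝ) + (m : ℝ) + 5/2) ≠ 0 := by positivity
  have harg1 : ((2 * (k + 1) + m : ℕ) : ℝ) - (k : ℝ) + 3/2 = ((k : ℝ) + (m : ℝ) + 5/2) + 1 := by
    push_cast; ring
  have harg2 : ((2 * (k + 1) + m : ℕ) : ℝ) - ((k + 1 : ℕ) : ℝ) + 3/2
      = (k : ℝ) + (m : ℝ) + 5/2 := by push_cast; ring
  simp only [a, e1, e2, e3, harg1, harg2, Real.Gamma_add_one hx, Nat.factorial_succ, pow_succ]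
  have hG0 : Real.Gamma (3/2 : ℝ) ≠ 0 := ne_of_gt (Real.Gamma_pos_of_pos (by norm_num))
  have hf1 : ((k.factorial : ℝ)) ≠ 0 := Nat.cast_ne_zero.2 k.factorial_ne_zero
  have hf2 : ((m.factorial : ℝ)) ≠ 0 := Nat.cast_ne_zero.2 m.factorial_ne_zero
  push_cast
  field_simp
  ring

lemma term_eq (n k : ℕ) (hk : 2 * k ≤ n) (r : ℝ) :
    (1 - r ^ 2) * (a n k * ((n - 2 * k : ℕ) : ℝ) * ((n - 2 * k - 1 : ℕ) : ℝ) * r ^ (n - 2 * k - 2))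
      - 4 * r * (a n k * ((n - 2 * k : ℕ) : ℝ) * r ^ (n - 2 * k - 1))
      + (n : ℝ) * ((n : ℝ) + 3) * (a n k * r ^ (n - 2 * k))
    = a n k * ((n - 2 * k : ℕ) : ℝ) * ((n - 2 * k - 1 : ℕ) : ℝ) * r ^ (n - 2 * k - 2)
      + a n k * (2 * (k : ℝ)) * (2 * (n : ℝ) - 2 * (k : ℝ) + 3) * r ^ (n - 2 * k) := by
  obtain ⟨j, rfl⟩ : ∃ j, n = 2 * k + j := ⟨n - 2 * k, by omega⟩
  match j with
  | 0 =>
    have e0 : 2 * k + 0 - 2 * k = 0 := by omega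
    simp only [e0, Nat.zero_sub, Nat.cast_zero, pow_zero, Nat.cast_ofNat]
    push_cast
    ring
  | 1 =>
    have e0 : 2 * k + 1 - 2 * k = 1 := by omega
    have e1 : 2 * k + 1 - 2 * k - 1 = 0 := by omega
    have e2 : 2 * k + 1 - 2 * k - 2 = 0 := by omega
    rw [e0] at *
    simp only [e0, e1, e2, Nat.cast_zero, Nat.cast_one, pow_zero, pow_one]
    push_cast
    ring
  | (m + 2) =>
    have e0 : 2 * k + (m + 2) - 2 * k = m + 2 := by omega
    have e1 : 2 * k + (m + 2) - 2 * k - 1 = m + 1 := by omega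
    have e2 : 2 * k + (m + 2) - 2 * k - 2 = m := by omega
    simp only [e0, e1, e2]
    push_cast
    ring

lemma ode (n : ℕ) :
    (1 - X ^ 2) * derivative (derivative (P n)) - C 4 * X * derivative (P n)
      + C ((n : ℝ) * ((n : ℝ) + 3)) * P n = 0 := by
  have hD : derivative (P n)
      = ∑ k ∈ Finset.range (n / 2 + 1),
          C (a n k * ((n - 2 * k : ℕ) : ℝ)) * X ^ (n - 2 * k - 1) := by
    rw [P, derivative_sum]
    refine Finset.sum_congr rfl fun k _ => ?_
    rw [derivative_C_mul, derivative_X_pow, C_mul, mul_assoc]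
  have hD2 : derivative (derivative (P n))
      = ∑ k ∈ Finset.range (n / 2 + 1),
          C (a n k * ((n - 2 * k : ℕ) : ℝ) * ((n - 2 * k - 1 : ℕ) : ℝ)) * X ^ (n - 2 * k - 2) := by
    rw [hD, derivative_sum]
    refine Finset.sum_congr rfl fun k _ => ?_
    have e : n - 2 * k - 1 - 1 = n - 2 * k - 2 := by omega
    rw [derivative_C_mul, derivative_X_pow, e]
    simp only [C_mul]
    ring
  apply Polynomial.funext
  intro r
  rw [hD2, hD, P]
  simp only [eval_add, eval_sub, eval_mul, eval_pow, eval_C, eval_X, eval_one,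
    eval_finset_sum, eval_zero, Finset.mul_sum]
  rw [← Finset.sum_sub_distrib, ← Finset.sum_add_distrib]
  have hcongr : ∀ k ∈ Finset.range (n / 2 + 1),
      ((1 - r ^ 2) * (a n k * ((n - 2 * k : ℕ) : ℝ) * ((n - 2 * k - 1 : ℕ) : ℝ) * r ^ (n - 2 * k - 2))
        - 4 * r * (a n k * ((n - 2 * k : ℕ) : ℝ) * r ^ (n - 2 * k - 1)))
        + (n : ℝ) * ((n : ℝ) + 3) * (a n k * r ^ (n - 2 * k))
      = a n k * ((n - 2 * k : ℕ) : ℝ) * ((n - 2 * k - 1 : ℕ) : ℝ) * r ^ (n - 2 * k - 2)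
        + a n k * (2 * (k : ℝ)) * (2 * (n : ℝ) - 2 * (k : ℝ) + 3) * r ^ (n - 2 * k) := by
    intro k hk
    have h2k : 2 * k ≤ n := by
      have := Finset.mem_range.1 hk
      omega
    have := term_eq n k h2k r
    linarith [this]
  rw [Finset.sum_congr rfl hcongr, Finset.sum_add_distrib]
  have hfirst : ∑ k ∈ Finset.range (n / 2 + 1),
      a n k * ((n - 2 * k : ℕ) : ℝ) * ((n - 2 * k - 1 : ℕ) : ℝ) * r ^ (n - 2 * k - 2)
      = ∑ k ∈ Finset.range (n / 2),
          a n k * ((n - 2 * k : ℕ) : ℝ) * ((n - 2 * k - 1 : ℕ) : ℝ) * r ^ (n - 2 * k - 2) := by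
    rw [Finset.sum_range_succ]
    have h0 : n - 2 * (n / 2) = 0 ∨ n - 2 * (n / 2) - 1 = 0 := by omega
    rcases h0 with h | h <;> simp [h]
  have hsecond : ∑ k ∈ Finset.range (n / 2 + 1),
      a n k * (2 * (k : ℝ)) * (2 * (n : ℝ) - 2 * (k : ℝ) + 3) * r ^ (n - 2 * k)
      = ∑ k ∈ Finset.range (n / 2),
          a n (k + 1) * (2 * ((k : ℝ) + 1)) * (2 * (n : ℝ) - 2 * ((k : ℝ) + 1) + 3)
            * r ^ (n - 2 * (k + 1)) := by
    rw [Finset.sum_range_succ']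
    simp
  rw [hfirst, hsecond, ← Finset.sum_add_distrib]
  apply Finset.sum_eq_zero
  intro k hk
  have hkn : 2 * (k + 1) ≤ n := by
    have := Finset.mem_range.1 hk
    omega
  have he : n - 2 * (k + 1) = n - 2 * k - 2 := by omega
  rw [he]
  linear_combination r ^ (n - 2 * k - 2) * a_key n k hkn

lemma lemA (n : ℕ) :
    derivative (derivative ((1 - X ^ 2) * P n))
      = C (-((n : ℝ) + 1) * ((n : ℝ) + 2)) * P n := by
  have hB := ode n
  have hC : C (-((n : ℝ) + 1) * ((n : ℝ) + 2)) = -C ((n : ℝ) * ((n : ℝ) + 3)) - C 2 := by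
    rw [← C_neg, ← C_sub]; congr 1; ring
  rw [hC]
  simp only [derivative_mul, derivative_sub, derivative_add, derivative_one, derivative_X_pow,
    derivative_X, derivative_C, derivative_zero]
  push_cast
  simp only [map_ofNat, C_1] at hB ⊢
  linear_combination hB

lemma comp_lemma (n : ℕ) :
    derivative (derivative (X * (1 - X) * ((P n).comp (C 2 * X - C 1))))
      = C (-((n : ℝ) + 1) * ((n : ℝ) + 2)) * (P n).comp (C 2 * X - C 1) := by
  have hS : derivative (C (2:ℝ) * X - C 1) = C 2 := by
    simp
  have hQ : X * (1 - X) * ((P n).comp (C 2 * X - C 1))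
      = C (4⁻¹ : ℝ) * (((1 - X ^ 2) * P n).comp (C 2 * X - C 1)) := by
    apply Polynomial.funext; intro r
    simp [eval_comp]
    ring
  rw [hQ, derivative_C_mul, derivative_comp, hS, derivative_C_mul, derivative_mul,
    derivative_C, derivative_comp, hS, lemA, mul_comp, C_comp]
  simp only [zero_mul, zero_add, ← mul_assoc, ← C_mul]
  norm_num

lemma rhs_eval (n : ℕ) (e x : ℝ) :
    deriv (deriv (fun y => y * (1 - y) * (e * gegenbauer (3/2) n (2 * y - 1)))) x
      = e * (-((n : ℝ) + 1) * ((n : ℝ) + 2)) * gegenbauer (3/2) n (2 * x - 1) := by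
  set Qf : Polynomial ℝ := C e * (X * (1 - X) * ((P n).comp (C 2 * X - C 1))) with hQf
  have hfun : (fun y : ℝ => y * (1 - y) * (e * gegenbauer (3/2) n (2 * y - 1)))
      = fun y => Qf.eval y := by
    funext y
    rw [hQf]
    simp only [eval_mul, eval_C, eval_X, eval_one, eval_sub, eval_comp]
    rw [eval_P]
    ring
  rw [hfun]
  have hd1 : deriv (fun y => Qf.eval y) = fun y => (derivative Qf).eval y :=
    funext fun y => Polynomial.deriv _
  rw [hd1]
  rw [Polynomial.deriv]
  have h2 : derivative (derivative Qf)
      = C e * (C (-((n : ℝ) + 1) * ((n : ℝ) + 2)) * (P n).comp (C 2 * X - C 1)) := by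
    rw [hQf, derivative_C_mul, derivative_C_mul, comp_lemma]
  rw [h2]
  simp only [eval_mul, eval_C, eval_comp, eval_sub, eval_X, eval_one]
  rw [eval_P]
  ring

end KimuraAux

theorem kimura_classical_solution (n : ℕ) :
    ∀ x t : ℝ,
      deriv (fun s => Real.exp (-((n : ℝ) + 1) * ((n : ℝ) + 2) * s) *
          gegenbauer (3/2) n (2 * x - 1)) t =
        deriv (deriv (fun y => y * (1 - y) *
          (Real.exp (-((n : ℝ) + 1) * ((n : ℝ) + 2) * t) *
            gegenbauer (3/2) n (2 * y - 1)))) x := by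
  intro x t
  set L : ℝ := -((n : ℝ) + 1) * ((n : ℝ) + 2) with hL
  have h1 : HasDerivAt (fun s : ℝ => L * s) L t := by
    simpa using (hasDerivAt_id t).const_mul L
  have h2 := (h1.exp).mul_const (gegenbauer (3/2) n (2 * x - 1))
  have h3 : deriv (fun s => Real.exp (L * s) * gegenbauer (3/2) n (2 * x - 1)) t
      = Real.exp (L * t) * L * gegenbauer (3/2) n (2 * x - 1) := h2.deriv
  rw [h3, KimuraAux.rhs_eval n (Real.exp (L * t)) x]
end

section
/- Let N be a natural number, let d_0, …, d_N be real numbers, let p(x) = Σ_{n=0}^{N} d_n · C_n^{3/2}(2x-1), and for t ∈ ℝ let r(x,t) = Σ_{n=0}^{N} d_n · e^{-(n+1)(n+2)t} · C_n^{3/2}(2x-1). Then for every t, ∫_{0}^{1} x·p(x) dx − ∫_{0}^{1} x·r(x,t) dx = (1/2) · Σ_{n=0}^{N} d_n · (1 − e^{-(n+1)(n+2)t}). -/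
open MeasureTheory Real

lemma poly_key (M j : ℕ) :
    ((Polynomial.X ^ M * (Polynomial.X + 2) ^ M : Polynomial ℝ)).coeff j
      = ∑ k ∈ Finset.range (M+1), (-1:ℝ)^(k+M) * ((2*k).choose j) * (M.choose k) := by
  have hb : (Polynomial.X * (Polynomial.X + 2) : Polynomial ℝ)
      = (Polynomial.X + 1) ^ 2 - 1 := by ring
  have h : (Polynomial.X ^ M * (Polynomial.X + 2) ^ M : Polynomial ℝ)
      = ((Polynomial.X + 1) ^ 2 - 1) ^ M := by rw [← mul_pow, hb]
  rw [h, sub_pow, Polynomial.finset_sum_coeff]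
  refine Finset.sum_congr rfl fun k hk => ?_
  have h2 : ((-1:Polynomial ℝ) ^ (k + M) * ((Polynomial.X + 1) ^ 2) ^ k * 1 ^ (M - k)
        * (M.choose k : Polynomial ℝ))
      = Polynomial.C ((-1:ℝ)^(k+M) * (M.choose k : ℝ)) * (Polynomial.X + 1) ^ (2*k) := by
    rw [← pow_mul]
    simp only [one_pow, mul_one, map_mul, map_pow, map_neg, map_one, Polynomial.C_eq_natCast]
    ring
  rw [h2, Polynomial.coeff_C_mul, Polynomial.coeff_X_add_one_pow]
  ring

lemma term_eq (M j k : ℕ) (hk : k ≤ M) :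
    (-1:ℝ)^(M + 1 - 1 - k + M) * (((2*(M + 1 - 1 - k)).choose j : ℝ)) * (M.choose (M + 1 - 1 - k))
      = (-1:ℝ)^k * (M.choose k) * ((2*M-2*k).choose j) := by
  have e1 : M + 1 - 1 - k = M - k := by omega
  have h1 : (M - k) + M = k + 2*(M-k) := by omega
  have h2 : 2*(M-k) = 2*M - 2*k := by omega
  rw [e1, Nat.choose_symm hk, h1, h2, pow_add,
    (show Even (2*M-2*k) from ⟨M-k, by omega⟩).neg_one_pow]
  ring

lemma sum_L1 (M : ℕ) :
    ∑ k ∈ Finset.range (M+1), (-1:ℝ)^k * (M.choose k) * ((2*M-2*k).choose M) = 2^M := by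
  have h := poly_key M M
  rw [Polynomial.coeff_X_pow_mul', if_pos le_rfl, Nat.sub_self,
    Polynomial.coeff_zero_eq_eval_zero] at h
  simp only [Polynomial.eval_pow, Polynomial.eval_add, Polynomial.eval_X,
    Polynomial.eval_ofNat, zero_add] at h
  rw [← Finset.sum_range_reflect] at h
  rw [h]
  exact Finset.sum_congr rfl fun k hk =>
    (term_eq M M k (by simpa [Nat.lt_succ_iff] using hk)).symm

lemma sum_L2 (M : ℕ) (hM : 1 ≤ M) :
    ∑ k ∈ Finset.range (M+1), (-1:ℝ)^k * (M.choose k) * ((2*M-2*k).choose (M-1)) = 0 := by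
  have h := poly_key M (M-1)
  rw [Polynomial.coeff_X_pow_mul', if_neg (by omega)] at h
  rw [← Finset.sum_range_reflect] at h
  rw [h]
  exact Finset.sum_congr rfl fun k hk =>
    (term_eq M (M-1) k (by simpa [Nat.lt_succ_iff] using hk)).symm

lemma gamma_ratio (j : ℕ) :
    Real.Gamma ((j:ℝ) + 3/2)
      = ((Nat.factorial (2*j+2) : ℝ) / (2 * 4^j * (Nat.factorial (j+1)))) * Real.Gamma (3/2) := by
  induction j with
  | zero => simp [Nat.factorial]
  | succ j ih =>
    have hne : (j:ℝ) + 3/2 ≠ 0 := by positivity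
    have h : ((j+1 : ℕ):ℝ) + 3/2 = ((j:ℝ) + 3/2) + 1 := by push_cast; ring
    rw [h, Real.Gamma_add_one hne, ih]
    have hf1 : (Nat.factorial (2*(j+1)+2) : ℝ)
        = (2*(j:ℝ)+4) * ((2*(j:ℝ)+3) * (Nat.factorial (2*j+2))) := by
      have : 2*(j+1)+2 = (2*j+3) + 1 := by omega
      rw [this, Nat.factorial_succ]
      have : 2*j+3 = (2*j+2) + 1 := by omega
      rw [this, Nat.factorial_succ]
      push_cast; ring
    have hf2 : (Nat.factorial (j+1+1) : ℝ) = ((j:ℝ)+2) * (Nat.factorial (j+1)) := by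
      rw [Nat.factorial_succ]; push_cast; ring
    rw [hf1, hf2]
    have h4 : (4:ℝ)^(j+1) = 4 * 4^j := by ring
    rw [h4]
    have hfj : (Nat.factorial (j+1) : ℝ) ≠ 0 := by positivity
    have h4j : (4:ℝ)^j ≠ 0 := by positivity
    field_simp
    ring

lemma integ_pow (m : ℕ) :
    ∫ x in (0:ℝ)..1, x * (2*(2*x-1))^m
      = 2^m/(2*((m:ℝ)+1)) - (2^(m+2) - (-2:ℝ)^(m+2))/(16*((m:ℝ)+1)*((m:ℝ)+2)) := by
  have hm1 : ((m:ℝ)+1) ≠ 0 := by positivity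
  have hm2 : ((m:ℝ)+2) ≠ 0 := by positivity
  set F : ℝ → ℝ := fun x =>
    x * (2*(2*x-1))^(m+1) / (4*((m:ℝ)+1)) - (2*(2*x-1))^(m+2) / (16*((m:ℝ)+1)*((m:ℝ)+2))
  have hderiv : ∀ x ∈ Set.uIcc (0:ℝ) 1, HasDerivAt F (x * (2*(2*x-1))^m) x := by
    intro x _
    have hu : HasDerivAt (fun x : ℝ => 2*(2*x-1)) 4 x := by
      have := ((hasDerivAt_id x).const_mul 2 |>.sub_const 1).const_mul 2
      norm_num at this
      exact this
    have h1 : HasDerivAt (fun x : ℝ => (2*(2*x-1))^(m+1))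
        (((m:ℝ)+1) * (2*(2*x-1))^m * 4) x := by
      simpa using (hu.fun_pow (m+1))
    have h2 : HasDerivAt (fun x : ℝ => (2*(2*x-1))^(m+2))
        (((m:ℝ)+2) * (2*(2*x-1))^(m+1) * 4) x := by
      simpa using (hu.fun_pow (m+2))
    have h3 : HasDerivAt (fun x : ℝ => x * (2*(2*x-1))^(m+1))
        (1 * (2*(2*x-1))^(m+1) + x * (((m:ℝ)+1) * (2*(2*x-1))^m * 4)) x :=
      (hasDerivAt_id x).mul h1
    have := (h3.div_const (4*((m:ℝ)+1))).sub (h2.div_const (16*((m:ℝ)+1)*((m:ℝ)+2)))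
    refine this.congr_deriv ?_
    have e : (2*(2*x-1))^(m+1) = (2*(2*x-1))^m * (2*(2*x-1)) := pow_succ _ _
    rw [e]
    field_simp
    ring
  have hc : ContinuousOn (fun x : ℝ => x * (2*(2*x-1))^m) (Set.uIcc (0:ℝ) 1) := by
    fun_prop
  rw [intervalIntegral.integral_eq_sub_of_hasDerivAt hderiv (hc.intervalIntegrable)]
  show F 1 - F 0 = _
  simp only [F]
  norm_num
  rw [show (2:ℝ)^(m+1) = 2 * 2^m by ring, show (2:ℝ)^(m+2) = 4 * 2^m by ring]
  field_simp
  ring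

lemma per_term (n k : ℕ) (hk : k ≤ n/2) :
    (-1:ℝ)^k * (Real.Gamma ((n:ℝ) - (k:ℝ) + 3/2) /
        (Real.Gamma (3/2) * (Nat.factorial k : ℝ) * (Nat.factorial (n-2*k) : ℝ))) *
      ((2:ℝ)^(n-2*k)/(2*(((n-2*k:ℕ):ℝ) + 1))
        - ((2:ℝ)^((n-2*k)+2) - (-2:ℝ)^((n-2*k)+2))/(16*(((n-2*k:ℕ):ℝ) + 1)*(((n-2*k:ℕ):ℝ) + 2)))
    = (-1:ℝ)^k * (((n+1).choose k : ℝ)) * (((2*(n+1)-2*k).choose (n+1) : ℝ)) / 2^(n+2)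
      - (1-(-1:ℝ)^n)/2 * ((-1:ℝ)^k * (((n+1).choose k : ℝ)) * (((2*(n+1)-2*k).choose n : ℝ))
          / (((n:ℝ)+1) * 2^(n+2))) := by
  have hkn : 2*k ≤ n := by omega
  set m := n - 2*k with hm
  set j := n - k with hj
  have e0 : (n:ℝ) - (k:ℝ) = ((j:ℕ):ℝ) := by
    rw [hj, Nat.cast_sub (by omega)]
  rw [e0, gamma_ratio j]
  rw [Nat.cast_choose ℝ (show k ≤ n+1 by omega),
      Nat.cast_choose ℝ (show n+1 ≤ 2*(n+1)-2*k by omega),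
      Nat.cast_choose ℝ (show n ≤ 2*(n+1)-2*k by omega)]
  rw [show n+1-k = j+1 by omega, show 2*(n+1)-2*k = 2*j+2 by omega,
      show 2*j+2-(n+1) = m+1 by omega, show 2*j+2-n = m+2 by omega]
  have hf1 : (Nat.factorial (m+1) : ℝ) = (((m:ℕ):ℝ) + 1) * (Nat.factorial m : ℝ) := by
    rw [Nat.factorial_succ]; push_cast; ring
  have hf2 : (Nat.factorial (m+2) : ℝ)
      = (((m:ℕ):ℝ) + 2) * ((((m:ℕ):ℝ) + 1) * (Nat.factorial m : ℝ)) := by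
    rw [show m+2 = (m+1)+1 by omega, Nat.factorial_succ]
    push_cast
    rw [hf1]; ring
  have hfn : (Nat.factorial (n+1) : ℝ) = ((n:ℝ)+1) * (Nat.factorial n : ℝ) := by
    rw [Nat.factorial_succ]; push_cast; ring
  rw [hf1, hf2, hfn]
  have hsgn : (-1:ℝ)^n = (-1:ℝ)^m := by
    rw [show n = m + 2*k by omega, pow_add, pow_mul]; norm_num
  have hneg2 : (-2:ℝ)^(m+2) = 4 * (-1:ℝ)^m * 2^m := by
    rw [show (-2:ℝ) = (-1)*2 by norm_num, mul_pow, pow_add, pow_add]; ring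
  rw [hsgn, hneg2]
  have h4 : (4:ℝ)^j = 2^m * 2^m * 4^k := by
    rw [show j = m + k by omega, pow_add, show (4:ℝ)^m = 2^m * 2^m by
      rw [← mul_pow]; norm_num]
  have h2n : (2:ℝ)^(n+2) = 2^m * 4^k * 4 := by
    rw [show n+2 = m + 2*k + 2 by omega, pow_add, pow_add, pow_mul]; norm_num
  have h2m2 : (2:ℝ)^(m+2) = 4 * 2^m := by rw [pow_add]; ring
  rw [h4, h2n, h2m2]
  have hγ : Real.Gamma (3/2) ≠ 0 := (Real.Gamma_pos_of_pos (by norm_num)).ne'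
  have hfk : (Nat.factorial k : ℝ) ≠ 0 := by positivity
  have hfm : (Nat.factorial m : ℝ) ≠ 0 := by positivity
  have hfj : (Nat.factorial (j+1) : ℝ) ≠ 0 := by positivity
  have hfn' : (Nat.factorial n : ℝ) ≠ 0 := by positivity
  have hfA : (Nat.factorial (2*j+2) : ℝ) ≠ 0 := by positivity
  have hm1 : ((m:ℕ):ℝ) + 1 ≠ 0 := by positivity
  have hm2 : ((m:ℕ):ℝ) + 2 ≠ 0 := by positivity
  have hn1 : ((n:ℝ)+1) ≠ 0 := by positivity
  have h2m : (2:ℝ)^m ≠ 0 := by positivity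
  have h4k : (4:ℝ)^k ≠ 0 := by positivity
  field_simp
  ring

lemma geg_integral (n : ℕ) :
    ∫ x in (0:ℝ)..1, x * gegenbauer (3/2) n (2*x-1) = 1/2 := by
  have hrw : ∀ x : ℝ, x * gegenbauer (3/2) n (2*x-1)
      = ∑ k ∈ Finset.range (n/2+1),
          ((-1:ℝ)^k * (Real.Gamma ((n:ℝ) - (k:ℝ) + 3/2) /
            (Real.Gamma (3/2) * (Nat.factorial k : ℝ) * (Nat.factorial (n-2*k) : ℝ))))
          * (x * (2*(2*x-1))^(n-2*k)) := by
    intro x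
    rw [gegenbauer, Finset.mul_sum]
    exact Finset.sum_congr rfl fun k _ => by ring
  rw [intervalIntegral.integral_congr (g := fun x => ∑ k ∈ Finset.range (n/2+1),
          ((-1:ℝ)^k * (Real.Gamma ((n:ℝ) - (k:ℝ) + 3/2) /
            (Real.Gamma (3/2) * (Nat.factorial k : ℝ) * (Nat.factorial (n-2*k) : ℝ))))
          * (x * (2*(2*x-1))^(n-2*k))) (fun x _ => hrw x)]
  rw [intervalIntegral.integral_finset_sum (fun k _ => by
    apply Continuous.intervalIntegrable
    fun_prop)]
  have step : ∀ k ∈ Finset.range (n/2+1),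
      (∫ x in (0:ℝ)..1, ((-1:ℝ)^k * (Real.Gamma ((n:ℝ) - (k:ℝ) + 3/2) /
            (Real.Gamma (3/2) * (Nat.factorial k : ℝ) * (Nat.factorial (n-2*k) : ℝ))))
          * (x * (2*(2*x-1))^(n-2*k)))
      = (-1:ℝ)^k * (((n+1).choose k : ℝ)) * (((2*(n+1)-2*k).choose (n+1) : ℝ)) / 2^(n+2)
        - (1-(-1:ℝ)^n)/2 * ((-1:ℝ)^k * (((n+1).choose k : ℝ)) * (((2*(n+1)-2*k).choose n : ℝ))
            / (((n:ℝ)+1) * 2^(n+2))) := by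
    intro k hk
    rw [intervalIntegral.integral_const_mul, integ_pow]
    exact per_term n k (by simpa [Nat.lt_succ_iff] using hk)
  rw [Finset.sum_congr rfl step]
  rw [Finset.sum_subset (Finset.range_subset_range.mpr (by omega : n/2+1 ≤ n+2))
    (fun k hk1 hk2 => ?_)]
  · rw [Finset.sum_sub_distrib, ← Finset.sum_div, ← Finset.mul_sum, ← Finset.sum_div]
    have hL1 := sum_L1 (n+1)
    have hL2 := sum_L2 (n+1) (by omega)
    simp only [Nat.add_sub_cancel] at hL2
    rw [hL1, hL2]
    have h2 : (2:ℝ)^(n+2) ≠ 0 := by positivity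
    rw [show (2:ℝ)^(n+2) = 2 * 2^(n+1) by ring]
    have h21 : (2:ℝ)^(n+1) ≠ 0 := by positivity
    field_simp
    ring
  · rw [Finset.mem_range] at hk1
    rw [Finset.mem_range, not_lt] at hk2
    rcases Nat.even_or_odd n with he | ho
    · obtain ⟨a, hna⟩ := he
      have hc1 : 2*(n+1)-2*k < n+1 := by omega
      rw [Nat.choose_eq_zero_of_lt hc1, Even.neg_one_pow (⟨a, hna⟩ : Even n)]
      norm_num
    · obtain ⟨a, hna⟩ := ho
      have h2k : 2*k = n+1 ∨ n+3 ≤ 2*k := by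
        rcases Nat.even_or_odd k with ⟨b, hb⟩ | ⟨b, hb⟩ <;> omega
      rcases h2k with h2k | h2k
      · rw [show 2*(n+1)-2*k = n+1 by omega, Nat.choose_self, Nat.choose_succ_self_right,
          Odd.neg_one_pow (⟨a, hna⟩ : Odd n)]
        have hn1 : ((n:ℝ)+1) ≠ 0 := by positivity
        push_cast
        field_simp
        ring
      · have hc1 : 2*(n+1)-2*k < n := by omega
        have hc2 : 2*(n+1)-2*k < n+1 := by omega
        rw [Nat.choose_eq_zero_of_lt hc1, Nat.choose_eq_zero_of_lt hc2]
        norm_num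

lemma int_combo (N : ℕ) (c : ℕ → ℝ) :
    ∫ x in (0:ℝ)..1, x * ∑ n ∈ Finset.range (N+1), c n * gegenbauer (3/2) n (2*x-1)
      = (∑ n ∈ Finset.range (N+1), c n) / 2 := by
  have hcont : ∀ n : ℕ, Continuous fun x : ℝ => gegenbauer (3/2) n (2*x-1) := by
    intro n
    unfold gegenbauer
    apply continuous_finset_sum
    intro k _
    fun_prop
  have hrw : ∀ x : ℝ, x * ∑ n ∈ Finset.range (N+1), c n * gegenbauer (3/2) n (2*x-1)
      = ∑ n ∈ Finset.range (N+1), c n * (x * gegenbauer (3/2) n (2*x-1)) := by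
    intro x
    rw [Finset.mul_sum]
    exact Finset.sum_congr rfl fun n _ => by ring
  rw [intervalIntegral.integral_congr (g := fun x =>
      ∑ n ∈ Finset.range (N+1), c n * (x * gegenbauer (3/2) n (2*x-1))) (fun x _ => hrw x)]
  rw [intervalIntegral.integral_finset_sum (fun n _ => by
    apply Continuous.intervalIntegrable
    exact continuous_const.mul (continuous_id.mul (hcont n)))]
  simp_rw [intervalIntegral.integral_const_mul, geg_integral]
  rw [Finset.sum_div]
  exact Finset.sum_congr rfl fun n _ => by ring

theorem fixation_probability_formula (N : ℕ) (d : ℕ → ℝ)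
    (p : ℝ → ℝ)
    (hp : ∀ x, p x = ∑ n ∈ Finset.range (N + 1), d n * gegenbauer (3/2) n (2 * x - 1))
    (r : ℝ → ℝ → ℝ)
    (hr : ∀ x t, r x t = ∑ n ∈ Finset.range (N + 1),
      d n * Real.exp (-((n : ℝ) + 1) * ((n : ℝ) + 2) * t) * gegenbauer (3/2) n (2 * x - 1)) :
    ∀ t : ℝ,
      (∫ x in (0:ℝ)..1, x * p x) - ∫ x in (0:ℝ)..1, x * r x t =
        (1/2) * ∑ n ∈ Finset.range (N + 1),
          d n * (1 - Real.exp (-((n : ℝ) + 1) * ((n : ℝ) + 2) * t)) := by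
  intro t
  have h1 : (∫ x in (0:ℝ)..1, x * p x) = (∑ n ∈ Finset.range (N+1), d n) / 2 := by
    rw [intervalIntegral.integral_congr (g := fun x =>
        x * ∑ n ∈ Finset.range (N+1), d n * gegenbauer (3/2) n (2*x-1))
      (fun x _ => by rw [hp x])]
    exact int_combo N d
  have h2 : (∫ x in (0:ℝ)..1, x * r x t)
      = (∑ n ∈ Finset.range (N+1), d n * Real.exp (-((n : ℝ) + 1) * ((n : ℝ) + 2) * t)) / 2 := by
    rw [intervalIntegral.integral_congr (g := fun x =>
        x * ∑ n ∈ Finset.range (N+1),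
          (d n * Real.exp (-((n : ℝ) + 1) * ((n : ℝ) + 2) * t)) * gegenbauer (3/2) n (2*x-1))
      (fun x _ => by rw [hr x t])]
    exact int_combo N _
  rw [h1, h2, div_sub_div_same, ← Finset.sum_sub_distrib, Finset.mul_sum]
  rw [Finset.sum_div]
  exact Finset.sum_congr rfl fun n _ => by ring
end

section
/- Let x₀ ∈ (0,1) and for each natural number n set d_n = (4(2n+3)/((n+1)(n+2))) · C_n^{3/2}(2x₀−1) · x₀(1−x₀). Then the series Σ_{n=0}^{∞} d_n · e^{-(n+1)(n+2)t} converges for every t > 0, and e^{2t} · Σ_{n=0}^{∞} d_n · e^{-(n+1)(n+2)t} tends to 6·x₀(1−x₀) as t → ∞. Equivalently, the fixation probability b(t) = x₀ − (1/2)·Σ_{n=0}^{∞} d_n e^{-(n+1)(n+2)t} for the Dirac-delta initial condition at x₀ satisfies e^{2t}·(x₀ − b(t)) → 3·x₀(1−x₀) as t → ∞. -/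
open MeasureTheory Real Filter

lemma gamma32_eq : Real.Gamma (3/2) = Real.sqrt π / 2 := by
  rw [show (3/2 : ℝ) = 1/2 + 1 by norm_num, Real.Gamma_add_one (by norm_num),
    Real.Gamma_one_half_eq]
  ring

lemma gamma32_le_one : Real.Gamma (3/2) ≤ 1 := by
  rw [gamma32_eq]
  have h1 : Real.sqrt π ≤ 2 := by
    rw [show (2:ℝ) = Real.sqrt 4 by rw [show (4:ℝ) = 2^2 by norm_num, Real.sqrt_sq]; norm_num]
    exact Real.sqrt_le_sqrt (by linarith [Real.pi_le_four])
  linarith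

lemma half_le_gamma32 : (1/2 : ℝ) ≤ Real.Gamma (3/2) := by
  rw [gamma32_eq]
  have h1 : (1:ℝ) ≤ Real.sqrt π := by
    rw [show (1:ℝ) = Real.sqrt 1 by simp]
    exact Real.sqrt_le_sqrt (by linarith [Real.pi_gt_three])
  linarith

lemma gamma_nat_add_le (m : ℕ) :
    Real.Gamma ((m : ℝ) + 3/2) ≤ (Nat.factorial (m+1) : ℝ) := by
  induction m with
  | zero => simpa using gamma32_le_one
  | succ m ih =>
    have hpos : (0:ℝ) < (m : ℝ) + 3/2 := by positivity
    have : ((m+1 : ℕ) : ℝ) + 3/2 = ((m : ℝ) + 3/2) + 1 := by push_cast; ring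
    rw [this, Real.Gamma_add_one (ne_of_gt hpos)]
    have hfac : (Nat.factorial (m+2) : ℝ) = ((m:ℝ)+2) * (Nat.factorial (m+1) : ℝ) := by
      rw [Nat.factorial_succ]; push_cast; ring
    have hΓpos : 0 < Real.Gamma ((m:ℝ) + 3/2) := Real.Gamma_pos_of_pos hpos
    have h1 : ((m:ℝ)+3/2) * Real.Gamma ((m:ℝ)+3/2) ≤ ((m:ℝ)+3/2) * (Nat.factorial (m+1) : ℝ) := by
      apply mul_le_mul_of_nonneg_left ih (by positivity)
    have h2 : ((m:ℝ)+3/2) * (Nat.factorial (m+1) : ℝ) ≤ ((m:ℝ)+2) * (Nat.factorial (m+1) : ℝ) := by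
      apply mul_le_mul_of_nonneg_right (by linarith) (by positivity)
    calc ((m:ℝ)+3/2) * Real.Gamma ((m:ℝ)+3/2) ≤ ((m:ℝ)+2) * (Nat.factorial (m+1) : ℝ) := by linarith
      _ = (Nat.factorial (m+2) : ℝ) := hfac.symm

lemma geg_bound (n : ℕ) (y : ℝ) (hy : |y| ≤ 1) :
    |gegenbauer (3/2) n y| ≤ 2 * ((n:ℝ)+1) * (Nat.factorial (n+1) : ℝ) * 2^n := by
  unfold gegenbauer
  have hterm : ∀ k ∈ Finset.range (n / 2 + 1),
      |(-1 : ℝ) ^ k *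
      (Real.Gamma ((n : ℝ) - (k : ℝ) + 3/2) /
        (Real.Gamma (3/2) * (Nat.factorial k : ℝ) * (Nat.factorial (n - 2 * k) : ℝ))) *
      (2 * y) ^ (n - 2 * k)| ≤ 2 * (Nat.factorial (n+1) : ℝ) * 2^n := by
    intro k hk
    rw [Finset.mem_range] at hk
    have hkn : k ≤ n := by omega
    have hcast : (n : ℝ) - (k : ℝ) = ((n - k : ℕ) : ℝ) := by
      rw [Nat.cast_sub hkn]
    have hΓnum : Real.Gamma ((n : ℝ) - (k : ℝ) + 3/2) ≤ (Nat.factorial (n+1) : ℝ) := by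
      rw [hcast]
      calc Real.Gamma (((n-k:ℕ) : ℝ) + 3/2) ≤ (Nat.factorial (n-k+1) : ℝ) := gamma_nat_add_le _
        _ ≤ (Nat.factorial (n+1) : ℝ) := by
            exact_mod_cast Nat.factorial_le (by omega)
    have hΓpos : 0 < Real.Gamma ((n : ℝ) - (k : ℝ) + 3/2) := by
      apply Real.Gamma_pos_of_pos
      rw [hcast]; positivity
    have hden : (1/2 : ℝ) ≤ Real.Gamma (3/2) * (Nat.factorial k : ℝ) * (Nat.factorial (n - 2*k) : ℝ) := by
      have h1 : (1:ℝ) ≤ (Nat.factorial k : ℝ) := by exact_mod_cast Nat.one_le_iff_ne_zero.mpr (Nat.factorial_ne_zero k)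
      have h2 : (1:ℝ) ≤ (Nat.factorial (n-2*k) : ℝ) := by exact_mod_cast Nat.one_le_iff_ne_zero.mpr (Nat.factorial_ne_zero _)
      have hΓ32 := half_le_gamma32
      have hΓ32pos : (0:ℝ) < Real.Gamma (3/2) := lt_of_lt_of_le (by norm_num) hΓ32
      calc (1/2:ℝ) = 1/2 * 1 * 1 := by ring
        _ ≤ Real.Gamma (3/2) * (Nat.factorial k : ℝ) * (Nat.factorial (n - 2*k) : ℝ) :=
          mul_le_mul (mul_le_mul hΓ32 h1 (by norm_num) hΓ32pos.le) h2 (by norm_num) (by positivity)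
    have hQ : Real.Gamma ((n : ℝ) - (k : ℝ) + 3/2) /
        (Real.Gamma (3/2) * (Nat.factorial k : ℝ) * (Nat.factorial (n - 2 * k) : ℝ)) ≤
        2 * (Nat.factorial (n+1) : ℝ) := by
      calc Real.Gamma ((n : ℝ) - (k : ℝ) + 3/2) /
          (Real.Gamma (3/2) * (Nat.factorial k : ℝ) * (Nat.factorial (n - 2 * k) : ℝ))
          ≤ (Nat.factorial (n+1) : ℝ) / (1/2) := by
            apply div_le_div₀ (by positivity) hΓnum (by norm_num) hden
        _ = 2 * (Nat.factorial (n+1) : ℝ) := by ring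
    have hP : |(2*y)^(n-2*k)| ≤ (2:ℝ)^n := by
      rw [abs_pow]
      calc |2*y|^(n-2*k) ≤ (2:ℝ)^(n-2*k) := by
            apply pow_le_pow_left₀ (abs_nonneg _)
            rw [abs_mul]; simp only [abs_two]
            nlinarith
        _ ≤ (2:ℝ)^n := by
            apply pow_le_pow_right₀ (by norm_num) (by omega)
    rw [abs_mul, abs_mul, abs_pow, abs_neg, abs_one, one_pow, one_mul]
    have hQabs : |Real.Gamma ((n : ℝ) - (k : ℝ) + 3/2) /
        (Real.Gamma (3/2) * (Nat.factorial k : ℝ) * (Nat.factorial (n - 2 * k) : ℝ))| ≤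
        2 * (Nat.factorial (n+1) : ℝ) := by
      rw [abs_of_pos (by positivity)]
      · exact hQ
    calc _ ≤ (2 * (Nat.factorial (n+1) : ℝ)) * (2:ℝ)^n :=
          mul_le_mul hQabs hP (abs_nonneg _) (by positivity)
      _ = 2 * (Nat.factorial (n+1) : ℝ) * 2^n := by ring
  calc |∑ k ∈ Finset.range (n / 2 + 1), _| ≤ ∑ k ∈ Finset.range (n / 2 + 1),
        |(-1 : ℝ) ^ k *
      (Real.Gamma ((n : ℝ) - (k : ℝ) + 3/2) /
        (Real.Gamma (3/2) * (Nat.factorial k : ℝ) * (Nat.factorial (n - 2 * k) : ℝ))) *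
      (2 * y) ^ (n - 2 * k)| := Finset.abs_sum_le_sum_abs _ _
    _ ≤ ∑ k ∈ Finset.range (n / 2 + 1), (2 * (Nat.factorial (n+1) : ℝ) * 2^n) :=
        Finset.sum_le_sum hterm
    _ = ((n/2 + 1 : ℕ) : ℝ) * (2 * (Nat.factorial (n+1) : ℝ) * 2^n) := by
        rw [Finset.sum_const, Finset.card_range, nsmul_eq_mul]
    _ ≤ ((n:ℝ)+1) * (2 * (Nat.factorial (n+1) : ℝ) * 2^n) := by
        apply mul_le_mul_of_nonneg_right _ (by positivity)
        have : (n/2 + 1 : ℕ) ≤ n + 1 := by omega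
        exact_mod_cast this
    _ = 2 * ((n:ℝ)+1) * (Nat.factorial (n+1) : ℝ) * 2^n := by ring

lemma d_bound (x₀ : ℝ) (hx₀ : x₀ ∈ Set.Ioo (0:ℝ) 1) (d : ℕ → ℝ)
    (hd : ∀ n : ℕ, d n = (4 * (2 * (n : ℝ) + 3) / (((n : ℝ) + 1) * ((n : ℝ) + 2))) *
      gegenbauer (3/2) n (2 * x₀ - 1) * (x₀ * (1 - x₀))) (n : ℕ) :
    |d n| ≤ 12 * ((n:ℝ)+1) * (Nat.factorial (n+1) : ℝ) * 2^n := by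
  obtain ⟨h0, h1⟩ := hx₀
  have hy : |2*x₀ - 1| ≤ 1 := by rw [abs_le]; constructor <;> linarith
  have hG := geg_bound n (2*x₀-1) hy
  have hc : |4 * (2 * (n : ℝ) + 3) / (((n : ℝ) + 1) * ((n : ℝ) + 2))| ≤ 6 := by
    rw [abs_of_pos (by positivity), div_le_iff₀ (by positivity)]
    nlinarith [Nat.cast_nonneg (α := ℝ) n]
  have hx : |x₀ * (1 - x₀)| ≤ 1 := by
    rw [abs_of_pos (by nlinarith)]; nlinarith
  rw [hd n, abs_mul, abs_mul]
  calc |4 * (2 * (n : ℝ) + 3) / (((n : ℝ) + 1) * ((n : ℝ) + 2))| *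
        |gegenbauer (3/2) n (2 * x₀ - 1)| * |x₀ * (1 - x₀)|
      ≤ 6 * (2 * ((n:ℝ)+1) * (Nat.factorial (n+1) : ℝ) * 2^n) * 1 := by
        apply mul_le_mul (mul_le_mul hc hG (abs_nonneg _) (by norm_num)) hx (abs_nonneg _)
        positivity
    _ = 12 * ((n:ℝ)+1) * (Nat.factorial (n+1) : ℝ) * 2^n := by ring

lemma summable_bound (t : ℝ) (ht : 0 < t) :
    Summable (fun n : ℕ => 12 * ((n:ℝ)+1) * (Nat.factorial (n+1) : ℝ) * 2^n *
      Real.exp (-((n : ℝ) + 1) * ((n : ℝ) + 2) * t)) := by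
  apply summable_of_ratio_norm_eventually_le (r := 1/2) (by norm_num)
  -- ratio tends to zero
  have h0 : Tendsto (fun x : ℝ => x^2 * Real.exp (-x)) atTop (nhds 0) :=
    tendsto_pow_mul_exp_neg_atTop_nhds_zero 2
  have h1 : Tendsto (fun n : ℕ => (2*t) * ((n:ℝ)+2)) atTop atTop := by
    apply Tendsto.const_mul_atTop (by linarith)
    exact tendsto_atTop_add_const_right _ _ tendsto_natCast_atTop_atTop
  have h2 : Tendsto (fun n : ℕ => ((2*t)*((n:ℝ)+2))^2 * Real.exp (-((2*t)*((n:ℝ)+2))))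
      atTop (nhds 0) := h0.comp h1
  have h3 : Tendsto (fun n : ℕ => 4*((n:ℝ)+2)^2 * Real.exp (-((2*t)*((n:ℝ)+2))))
      atTop (nhds 0) := by
    have := h2.const_mul (1/t^2)
    rw [mul_zero] at this
    apply this.congr
    intro n
    field_simp
    ring
  have h4 : ∀ᶠ n : ℕ in atTop,
      4*((n:ℝ)+2)^2 * Real.exp (-((2*t)*((n:ℝ)+2))) ≤ 1/2 := by
    filter_upwards [h3.eventually (eventually_lt_nhds (by norm_num : (0:ℝ) < 1/2))] with n hn
    exact le_of_lt hn
  filter_upwards [h4] with n hn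
  have hfac : (Nat.factorial (n+2) : ℝ) = ((n:ℝ)+2) * (Nat.factorial (n+1) : ℝ) := by
    rw [Nat.factorial_succ]; push_cast; ring
  have hE : Real.exp (-(((n+1:ℕ):ℝ)+1) * (((n+1:ℕ):ℝ)+2) * t) =
      Real.exp (-((n:ℝ)+1) * ((n:ℝ)+2) * t) * Real.exp (-((2*t)*((n:ℝ)+2))) := by
    rw [← Real.exp_add]; push_cast; ring_nf
  rw [Real.norm_eq_abs, Real.norm_eq_abs, abs_of_pos (by positivity), abs_of_pos (by positivity)]
  have hposA : (0:ℝ) < (Nat.factorial (n+1) : ℝ) * 2^n * Real.exp (-((n:ℝ)+1) * ((n:ℝ)+2) * t) := by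
    positivity
  calc 12 * (((n+1:ℕ):ℝ)+1) * (Nat.factorial (n+1+1) : ℝ) * 2^(n+1) *
        Real.exp (-(((n+1:ℕ):ℝ)+1) * (((n+1:ℕ):ℝ)+2) * t)
      = (4*((n:ℝ)+2)^2 * Real.exp (-((2*t)*((n:ℝ)+2)))) *
        (6 * ((Nat.factorial (n+1) : ℝ) * 2^n * Real.exp (-((n:ℝ)+1) * ((n:ℝ)+2) * t))) := by
        rw [hE, show n+1+1 = n+2 from rfl, hfac]; push_cast; ring
    _ ≤ (1/2) * (6 * ((Nat.factorial (n+1) : ℝ) * 2^n * Real.exp (-((n:ℝ)+1) * ((n:ℝ)+2) * t))) := by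
        apply mul_le_mul_of_nonneg_right hn (by positivity)
    _ ≤ 1/2 * (12 * ((n:ℝ)+1) * (Nat.factorial (n+1) : ℝ) * 2^n *
        Real.exp (-((n:ℝ)+1) * ((n:ℝ)+2) * t)) := by
        nlinarith [hposA, Nat.cast_nonneg (α := ℝ) n]

theorem fixation_probability_asymptotics (x₀ : ℝ) (hx₀ : x₀ ∈ Set.Ioo (0:ℝ) 1)
    (d : ℕ → ℝ)
    (hd : ∀ n : ℕ, d n = (4 * (2 * (n : ℝ) + 3) / (((n : ℝ) + 1) * ((n : ℝ) + 2))) *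
      gegenbauer (3/2) n (2 * x₀ - 1) * (x₀ * (1 - x₀)))
    (b : ℝ → ℝ)
    (hb : ∀ t, b t = x₀ -
      (1/2) * ∑' n : ℕ, d n * Real.exp (-((n : ℝ) + 1) * ((n : ℝ) + 2) * t)) :
    (∀ t : ℝ, 0 < t →
      Summable (fun n : ℕ => d n * Real.exp (-((n : ℝ) + 1) * ((n : ℝ) + 2) * t))) ∧
    Tendsto (fun t : ℝ => Real.exp (2 * t) *
        ∑' n : ℕ, d n * Real.exp (-((n : ℝ) + 1) * ((n : ℝ) + 2) * t))
      atTop (nhds (6 * x₀ * (1 - x₀))) ∧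
    Tendsto (fun t : ℝ => Real.exp (2 * t) * (x₀ - b t))
      atTop (nhds (3 * x₀ * (1 - x₀))) := by
  set f : ℝ → ℕ → ℝ := fun t n => d n * Real.exp (-((n : ℝ) + 1) * ((n : ℝ) + 2) * t) with hf
  -- summability
  have hsum : ∀ t : ℝ, 0 < t → Summable (f t) := by
    intro t ht
    apply Summable.of_norm_bounded (summable_bound t ht)
    intro n
    rw [Real.norm_eq_abs, abs_mul, Real.abs_exp]
    exact mul_le_mul_of_nonneg_right (d_bound x₀ hx₀ d hd n) (Real.exp_pos _).le
  -- value of d 0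
  have hg0 : gegenbauer (3/2) 0 (2*x₀-1) = 1 := by
    unfold gegenbauer
    rw [Finset.sum_range_one]
    norm_num
    exact (ne_of_gt (Real.Gamma_pos_of_pos (by norm_num : (0:ℝ) < 3/2)))
  have hd0 : d 0 = 6 * x₀ * (1 - x₀) := by
    rw [hd 0, hg0]; norm_num; ring
  -- summability of the shifted absolute series at t = 1
  have hshiftabs : ∀ t : ℝ, 0 < t → Summable (fun n : ℕ => |f t (n+1)|) := by
    intro t ht
    exact ((summable_nat_add_iff 1).mpr (hsum t ht)).abs
  set M : ℝ := ∑' n : ℕ, |f 1 (n+1)| with hM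
  have hMnonneg : 0 ≤ M := tsum_nonneg (fun n => abs_nonneg _)
  -- tail bound for t ≥ 1
  have htail : ∀ t : ℝ, 1 ≤ t → |∑' n : ℕ, f t (n+1)| ≤ M * Real.exp (-6*(t-1)) := by
    intro t ht
    have ht0 : (0:ℝ) < t := by linarith
    have hterm : ∀ n : ℕ, |f t (n+1)| ≤ |f 1 (n+1)| * Real.exp (-6*(t-1)) := by
      intro n
      simp only [hf]
      rw [abs_mul, Real.abs_exp, abs_mul, Real.abs_exp]
      have hc : (6:ℝ) ≤ (((n+1:ℕ):ℝ)+1) * (((n+1:ℕ):ℝ)+2) := by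
        push_cast
        nlinarith [Nat.cast_nonneg (α := ℝ) n]
      have hE : Real.exp (-(((n+1:ℕ):ℝ)+1) * ((((n+1:ℕ):ℝ))+2) * t) ≤
          Real.exp (-(((n+1:ℕ):ℝ)+1) * ((((n+1:ℕ):ℝ))+2) * 1) * Real.exp (-6*(t-1)) := by
        rw [← Real.exp_add]
        apply Real.exp_le_exp.mpr
        nlinarith
      calc |d (n+1)| * Real.exp (-(((n+1:ℕ):ℝ)+1) * ((((n+1:ℕ):ℝ))+2) * t)
          ≤ |d (n+1)| * (Real.exp (-(((n+1:ℕ):ℝ)+1) * ((((n+1:ℕ):ℝ))+2) * 1) * Real.exp (-6*(t-1))) :=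
            mul_le_mul_of_nonneg_left hE (abs_nonneg _)
        _ = |d (n+1)| * Real.exp (-(((n+1:ℕ):ℝ)+1) * ((((n+1:ℕ):ℝ))+2) * 1) * Real.exp (-6*(t-1)) := by
            ring
    have hshiftnorm : Summable (fun n : ℕ => ‖f t (n+1)‖) := by
      simpa only [Real.norm_eq_abs] using hshiftabs t ht0
    calc |∑' n : ℕ, f t (n+1)| = ‖∑' n : ℕ, f t (n+1)‖ := (Real.norm_eq_abs _).symm
      _ ≤ ∑' n : ℕ, ‖f t (n+1)‖ := norm_tsum_le_tsum_norm hshiftnorm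
      _ = ∑' n : ℕ, |f t (n+1)| := by simp only [Real.norm_eq_abs]
      _ ≤ ∑' n : ℕ, |f 1 (n+1)| * Real.exp (-6*(t-1)) :=
          Summable.tsum_le_tsum hterm (hshiftabs t ht0) ((hshiftabs 1 one_pos).mul_right _)
      _ = M * Real.exp (-6*(t-1)) := tsum_mul_right
  -- the key limit : exp(2t) * tail → 0
  have hexp4 : Tendsto (fun t : ℝ => Real.exp (-(4*t))) atTop (nhds 0) := by
    have h4 : Tendsto (fun t : ℝ => 4*t) atTop atTop :=
      Tendsto.const_mul_atTop (by norm_num) tendsto_id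
    exact Real.tendsto_exp_neg_atTop_nhds_zero.comp h4
  have hU : Tendsto (fun t : ℝ => M * Real.exp 6 * Real.exp (-(4*t))) atTop (nhds 0) := by
    have := hexp4.const_mul (M * Real.exp 6)
    simpa using this
  have hkey : Tendsto (fun t : ℝ => Real.exp (2*t) * ∑' n : ℕ, f t (n+1)) atTop (nhds 0) := by
    have hUneg := hU.neg
    rw [neg_zero] at hUneg
    apply tendsto_of_tendsto_of_tendsto_of_le_of_le' hUneg hU
    · filter_upwards [eventually_ge_atTop (1:ℝ)] with t ht
      have h1 := htail t ht
      have h2 : |Real.exp (2*t) * ∑' n : ℕ, f t (n+1)| ≤ M * Real.exp 6 * Real.exp (-(4*t)) := by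
        rw [abs_mul, Real.abs_exp]
        calc Real.exp (2*t) * |∑' n : ℕ, f t (n+1)| ≤ Real.exp (2*t) * (M * Real.exp (-6*(t-1))) :=
              mul_le_mul_of_nonneg_left h1 (Real.exp_pos _).le
          _ = M * Real.exp 6 * Real.exp (-(4*t)) := by
              have e : Real.exp (2*t) * Real.exp (-6*(t-1)) = Real.exp 6 * Real.exp (-(4*t)) := by
                rw [← Real.exp_add, ← Real.exp_add]; ring_nf
              linear_combination M * e
      linarith [(abs_le.mp h2).1]
    · filter_upwards [eventually_ge_atTop (1:ℝ)] with t ht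
      have h1 := htail t ht
      have h2 : |Real.exp (2*t) * ∑' n : ℕ, f t (n+1)| ≤ M * Real.exp 6 * Real.exp (-(4*t)) := by
        rw [abs_mul, Real.abs_exp]
        calc Real.exp (2*t) * |∑' n : ℕ, f t (n+1)| ≤ Real.exp (2*t) * (M * Real.exp (-6*(t-1))) :=
              mul_le_mul_of_nonneg_left h1 (Real.exp_pos _).le
          _ = M * Real.exp 6 * Real.exp (-(4*t)) := by
              have e : Real.exp (2*t) * Real.exp (-6*(t-1)) = Real.exp 6 * Real.exp (-(4*t)) := by
                rw [← Real.exp_add, ← Real.exp_add]; ring_nf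
              linear_combination M * e
      linarith [(abs_le.mp h2).2]
  -- part 2
  have hpart2 : Tendsto (fun t : ℝ => Real.exp (2 * t) * ∑' n : ℕ, f t n)
      atTop (nhds (6 * x₀ * (1 - x₀))) := by
    have heq : ∀ᶠ t : ℝ in atTop,
        d 0 + Real.exp (2*t) * ∑' n : ℕ, f t (n+1) = Real.exp (2 * t) * ∑' n : ℕ, f t n := by
      filter_upwards [eventually_ge_atTop (1:ℝ)] with t ht
      have ht0 : (0:ℝ) < t := by linarith
      rw [Summable.tsum_eq_zero_add (hsum t ht0), mul_add]
      have hf0 : f t 0 = d 0 * Real.exp (-(2*t)) := by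
        simp only [hf]; norm_num
      rw [hf0, show Real.exp (2*t) * (d 0 * Real.exp (-(2*t))) = d 0 by
        rw [show Real.exp (2*t) * (d 0 * Real.exp (-(2*t))) = d 0 * (Real.exp (2*t) * Real.exp (-(2*t))) by ring,
          ← Real.exp_add]; simp]
    have h := (tendsto_const_nhds (x := d 0) (f := atTop (α := ℝ))).add hkey
    rw [add_zero, hd0] at h
    rw [hd0] at heq
    exact Tendsto.congr' heq h
  refine ⟨hsum, hpart2, ?_⟩
  have heq3 : ∀ t : ℝ, Real.exp (2*t) * (x₀ - b t) = (1/2) * (Real.exp (2 * t) * ∑' n : ℕ, f t n) := by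
    intro t
    rw [hb t]; ring
  have h := hpart2.const_mul (1/2 : ℝ)
  have : (1/2 : ℝ) * (6 * x₀ * (1 - x₀)) = 3 * x₀ * (1 - x₀) := by ring
  rw [this] at h
  exact Tendsto.congr (fun t => (heq3 t).symm) h
end
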